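/- Let d > 0 be a real number, let Z ~ N(0,1), and let U be the d-quantization of Z. Then E[U²] = 2·Q(d/2) + 2·Σ_{ℓ=2}^∞ (2ℓ−1)·Q(dℓ − d/2), the series being convergent. -/

import Mathlib

open MeasureTheory ProbabilityTheory

/-- The standard Gaussian tail function `Q(x) = (1/√(2π)) ∫_x^∞ exp(−z²/2) dz`. -/
noncomputable def gaussQ (x : ℝ) : ℝ :=
  (Real.sqrt (2 * Real.pi))⁻¹ * ∫ z in Set.Ioi x, Real.exp (-z ^ 2 / 2)

lemma gq_pdf01 (z : ℝ) : gaussianPDFReal 0 1 z = (Real.sqrt (2*Real.pi))⁻¹ * Real.exp (-z^2/2) := by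
  simp [gaussianPDFReal]

lemma gq_toReal (s : Set ℝ) :
    ((gaussianReal 0 1) s).toReal = ∫ z in s, gaussianPDFReal 0 1 z := by
  rw [gaussianReal_apply_eq_integral 0 one_ne_zero s, ENNReal.toReal_ofReal]
  exact integral_nonneg fun z => gaussianPDFReal_nonneg 0 1 z

lemma gaussQ_eq (x : ℝ) : gaussQ x = ((gaussianReal 0 1) (Set.Ioi x)).toReal := by
  rw [gq_toReal]
  simp_rw [gq_pdf01]
  rw [integral_const_mul]
  rfl

lemma gaussQ_nonneg (x : ℝ) : 0 ≤ gaussQ x := by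
  rw [gaussQ_eq]; exact ENNReal.toReal_nonneg

lemma gaussQ_anti {a b : ℝ} (h : a ≤ b) : gaussQ b ≤ gaussQ a := by
  rw [gaussQ_eq, gaussQ_eq]
  exact ENNReal.toReal_mono (measure_ne_top _ _)
    (measure_mono (Set.Ioi_subset_Ioi h))

lemma gq_Ioc {a b : ℝ} (h : a ≤ b) :
    ((gaussianReal 0 1) (Set.Ioc a b)).toReal = gaussQ a - gaussQ b := by
  have hsplit : (gaussianReal 0 1) (Set.Ioi a)
      = (gaussianReal 0 1) (Set.Ioc a b) + (gaussianReal 0 1) (Set.Ioi b) := by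
    rw [← measure_union (Set.Ioc_disjoint_Ioi le_rfl) measurableSet_Ioi,
      Set.Ioc_union_Ioi_eq_Ioi h]
  rw [gaussQ_eq, gaussQ_eq, hsplit, ENNReal.toReal_add (measure_ne_top _ _) (measure_ne_top _ _)]
  ring

lemma gq_Ioc_neg {a b : ℝ} (h : a ≤ b) :
    ((gaussianReal 0 1) (Set.Ioc (-b) (-a))).toReal
      = ((gaussianReal 0 1) (Set.Ioc a b)).toReal := by
  rw [gq_toReal, gq_toReal, ← intervalIntegral.integral_of_le (by linarith : -b ≤ -a),
    ← intervalIntegral.integral_of_le h, ← intervalIntegral.integral_comp_neg]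
  congr 1 with x
  simp [gq_pdf01]

lemma gq_exp_int : Integrable (fun z : ℝ => Real.exp (-z^2/2)) := by
  have h := integrable_exp_neg_mul_sq (show (0:ℝ) < 1/2 by norm_num)
  exact h.congr (Filter.Eventually.of_forall fun x => by ring_nf)

lemma gq_pow4_int : Integrable (fun z : ℝ => z^4 * Real.exp (-z^2/2)) := by
  have h := integrable_rpow_mul_exp_neg_mul_sq (show (0:ℝ) < 1/2 by norm_num)
    (show (-1:ℝ) < 4 by norm_num)
  refine h.congr (Filter.Eventually.of_forall fun x => ?_)
  show x ^ (4:ℝ) * Real.exp (-(1/2) * x^2) = x^4 * Real.exp (-x^2/2)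
  rw [show ((4:ℝ)) = ((4:ℕ):ℝ) by norm_num, Real.rpow_natCast]
  ring_nf

lemma gaussQ_bound : ∃ C : ℝ, 0 ≤ C ∧ ∀ x : ℝ, 0 < x → gaussQ x ≤ C / x^4 := by
  set K : ℝ := ∫ z : ℝ, z^4 * Real.exp (-z^2/2) with hK
  have hK0 : 0 ≤ K := integral_nonneg fun z => by positivity
  refine ⟨(Real.sqrt (2*Real.pi))⁻¹ * K, by positivity, fun x hx => ?_⟩
  have hx4 : (0:ℝ) < x^4 := by positivity
  have h1 : ∫ z in Set.Ioi x, Real.exp (-z^2/2)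
      ≤ ∫ z in Set.Ioi x, x⁻¹^4 * (z^4 * Real.exp (-z^2/2)) := by
    refine setIntegral_mono_on gq_exp_int.integrableOn
      (gq_pow4_int.integrableOn.const_mul _) measurableSet_Ioi fun z hz => ?_
    have hz' : x ≤ z := le_of_lt hz
    have h4 : x^4 ≤ z^4 := pow_le_pow_left₀ hx.le hz' 4
    calc Real.exp (-z^2/2) = x⁻¹^4 * (x^4 * Real.exp (-z^2/2)) := by
          rw [inv_pow, ← mul_assoc, inv_mul_cancel₀ hx4.ne', one_mul]
      _ ≤ x⁻¹^4 * (z^4 * Real.exp (-z^2/2)) := by gcongr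
  have h2 : ∫ z in Set.Ioi x, x⁻¹^4 * (z^4 * Real.exp (-z^2/2))
      = x⁻¹^4 * ∫ z in Set.Ioi x, z^4 * Real.exp (-z^2/2) := integral_const_mul _ _
  have h3 : ∫ z in Set.Ioi x, z^4 * Real.exp (-z^2/2) ≤ K :=
    setIntegral_le_integral gq_pow4_int (Filter.Eventually.of_forall fun z => by positivity)
  have hmain : ∫ z in Set.Ioi x, Real.exp (-z^2/2) ≤ x⁻¹^4 * K := by
    refine h1.trans ?_
    rw [h2]
    exact mul_le_mul_of_nonneg_left h3 (by positivity)
  have : gaussQ x ≤ (Real.sqrt (2*Real.pi))⁻¹ * (x⁻¹^4 * K) := by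
    unfold gaussQ
    refine mul_le_mul_of_nonneg_left ?_ (by positivity)
    exact hmain
  refine this.trans_eq ?_
  field_simp

open Filter


lemma gq_abel (q : ℕ → ℝ) (hq0 : ∀ n, 0 ≤ q n) (hmono : ∀ n, q (n+1) ≤ q n)
    (hsum : Summable (fun n : ℕ => ((n:ℝ)+1)^2 * q n))
    (hc : Summable (fun n : ℕ => (2*(n:ℝ)+1) * q n)) :
    HasSum (fun n : ℕ => ((n:ℝ)+1)^2 * (q n - q (n+1)))
      (∑' n : ℕ, (2*(n:ℝ)+1) * q n) := by
  have hnn : ∀ n : ℕ, 0 ≤ ((n:ℝ)+1)^2 * (q n - q (n+1)) := fun n =>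
    mul_nonneg (by positivity) (sub_nonneg.mpr (hmono n))
  rw [hasSum_iff_tendsto_nat_of_nonneg hnn]
  have hid : ∀ N : ℕ, ∑ n ∈ Finset.range N, ((n:ℝ)+1)^2 * (q n - q (n+1))
      = (∑ n ∈ Finset.range N, (2*(n:ℝ)+1) * q n) - (N:ℝ)^2 * q N := by
    intro N
    induction N with
    | zero => simp
    | succ N ih =>
      rw [Finset.sum_range_succ, Finset.sum_range_succ, ih]
      push_cast
      ring
  simp_rw [hid]
  have h1 : Tendsto (fun N => ∑ n ∈ Finset.range N, (2*(n:ℝ)+1) * q n) atTop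
      (nhds (∑' n : ℕ, (2*(n:ℝ)+1) * q n)) := by
    have := hc.hasSum
    rwa [hasSum_iff_tendsto_nat_of_nonneg
      (fun n => mul_nonneg (by positivity) (hq0 n))] at this
  have h2 : Tendsto (fun N : ℕ => (N:ℝ)^2 * q N) atTop (nhds 0) := by
    have hA : Tendsto (fun n : ℕ => ((n:ℝ)+1)^2 * q n) atTop (nhds 0) :=
      hsum.tendsto_atTop_zero
    refine squeeze_zero (fun n => mul_nonneg (by positivity) (hq0 n)) (fun n => ?_) hA
    exact mul_le_mul_of_nonneg_right (by nlinarith [Nat.cast_nonneg (α := ℝ) n]) (hq0 n)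
  simpa using h1.sub h2

lemma gq_ceil_char (d : ℝ) (hd : 0 < d) (z : ℝ) (ℓ : ℤ) :
    z ∈ Set.Ioc (d*ℓ - d/2) (d*ℓ + d/2) ↔ ⌈z/d - 1/2⌉ = ℓ := by
  have hzd : z / d * d = z := div_mul_cancel₀ z hd.ne'
  rw [Int.ceil_eq_iff, Set.mem_Ioc]
  constructor
  · rintro ⟨h1, h2⟩
    constructor
    · nlinarith
    · nlinarith
  · rintro ⟨h1, h2⟩
    constructor
    · nlinarith
    · nlinarith

/-- **Series identity for the second moment of the `d`-quantization of a standard Gaussian.**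
If `Z ~ N(0,1)` and `U` is the `d`-quantization of `Z` (i.e. `U = ℓ` whenever
`Z ∈ (dℓ − d/2, dℓ + d/2]`), then for `d > 0`,
`E[U²] = 2·Q(d/2) + 2·∑_{ℓ=2}^∞ (2ℓ−1)·Q(dℓ − d/2)`, the series being convergent
(below the sum over `ℓ ≥ 2` is indexed by `ℓ = k + 2`, `k : ℕ`). -/
theorem quantization_second_moment_series
    {Ω : Type*} [MeasurableSpace Ω] (P : Measure Ω) [IsProbabilityMeasure P]
    (d : ℝ) (hd : 0 < d)
    (Z : Ω → ℝ) (hZ : Measurable Z) (hZlaw : P.map Z = gaussianReal 0 1)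
    (U : Ω → ℤ)
    (hquant : ∀ ω, ∀ ℓ : ℤ,
      Z ω ∈ Set.Ioc (d * ℓ - d / 2) (d * ℓ + d / 2) → U ω = ℓ) :
    Integrable (fun ω => (U ω : ℝ) ^ 2) P ∧
    Summable (fun k : ℕ => (2 * ((k : ℝ) + 2) - 1) * gaussQ (d * ((k : ℝ) + 2) - d / 2)) ∧
    ∫ ω, (U ω : ℝ) ^ 2 ∂P
      = 2 * gaussQ (d / 2)
        + 2 * ∑' k : ℕ, (2 * ((k : ℝ) + 2) - 1) * gaussQ (d * ((k : ℝ) + 2) - d / 2) := by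
  have hU : ∀ ω, U ω = ⌈Z ω / d - 1/2⌉ := fun ω =>
    hquant ω ⌈Z ω / d - 1/2⌉ ((gq_ceil_char d hd (Z ω) _).mpr rfl)
  set γ : Measure ℝ := gaussianReal 0 1 with hγ
  set F : ℝ → ℝ := fun z => ((⌈z/d - 1/2⌉ : ℤ) : ℝ)^2 with hF
  have hUF : (fun ω => (U ω : ℝ)^2) = fun ω => F (Z ω) := by
    funext ω; rw [hU ω]
  have hFmeas : Measurable F := by
    have h1 : Measurable fun z : ℝ => ⌈z/d - 1/2⌉ :=
      Int.measurable_ceil.comp ((measurable_id.div_const d).sub_const (1/2))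
    exact (measurable_from_top (f := fun n : ℤ => ((n:ℝ))^2)).comp h1
  -- Integrability of Z^2 under P
  have hZ2γ : Integrable (fun z : ℝ => z^2) γ := by
    rw [hγ, gaussianReal_of_var_ne_zero 0 one_ne_zero,
      integrable_withDensity_iff (measurable_gaussianPDF 0 1)
        (Filter.Eventually.of_forall fun x => ENNReal.ofReal_lt_top)]
    have heq : ∀ x : ℝ, x^2 * ((gaussianPDF 0 1 x)).toReal
        = (Real.sqrt (2*Real.pi))⁻¹ * (x^2 * Real.exp (-x^2/2)) := by
      intro x
      rw [gaussianPDF, ENNReal.toReal_ofReal (gaussianPDFReal_nonneg _ _ _), gq_pdf01]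
      ring
    have hbase : Integrable (fun x : ℝ => x^2 * Real.exp (-x^2/2)) := by
      have h := integrable_rpow_mul_exp_neg_mul_sq (show (0:ℝ) < 1/2 by norm_num)
        (show (-1:ℝ) < 2 by norm_num)
      refine h.congr (Filter.Eventually.of_forall fun x => ?_)
      show x ^ (2:ℝ) * Real.exp (-(1/2) * x^2) = x^2 * Real.exp (-x^2/2)
      rw [show ((2:ℝ)) = ((2:ℕ):ℝ) by norm_num, Real.rpow_natCast]
      ring_nf
    exact (hbase.const_mul _).congr (Filter.Eventually.of_forall fun x => (heq x).symm)
  have hZ2 : Integrable (fun ω => (Z ω)^2) P := by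
    have hmm : Integrable (fun z : ℝ => z^2) (P.map Z) := by rw [hZlaw]; exact hZ2γ
    exact (integrable_map_measure
      (by rw [hZlaw]; exact (measurable_id.pow_const 2).aestronglyMeasurable)
      hZ.aemeasurable).mp hmm
  have hUmeas : Measurable fun ω => (U ω : ℝ)^2 := by
    rw [hUF]; exact hFmeas.comp hZ
  have hint : Integrable (fun ω => (U ω : ℝ)^2) P := by
    refine Integrable.mono' ((hZ2.const_mul (2/d^2)).add (integrable_const (9/2)))
      hUmeas.aestronglyMeasurable (Filter.Eventually.of_forall fun ω => ?_)
    rw [Real.norm_eq_abs, abs_of_nonneg (sq_nonneg _), hU ω]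
    have h1 : ((⌈Z ω / d - 1/2⌉ : ℤ) : ℝ) < (Z ω / d - 1/2) + 1 := Int.ceil_lt_add_one _
    have h2 : Z ω / d - 1/2 ≤ ((⌈Z ω / d - 1/2⌉ : ℤ) : ℝ) := Int.le_ceil _
    have hb : ((⌈Z ω / d - 1/2⌉ : ℤ) : ℝ)^2 ≤ (|Z ω / d| + 3/2)^2 := by
      refine sq_le_sq' ?_ ?_
      · have := neg_abs_le (Z ω / d); linarith
      · have := le_abs_self (Z ω / d); linarith
    have hw : (Z ω / d)^2 = (Z ω)^2 / d^2 := div_pow _ _ _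
    have hsq : |Z ω / d|^2 = (Z ω / d)^2 := sq_abs _
    have hfin : (|Z ω / d| + 3/2)^2 ≤ 2/d^2 * (Z ω)^2 + 9/2 := by
      have e1 : (|Z ω / d| + 3/2)^2 = |Z ω / d|^2 + 3*|Z ω / d| + 9/4 := by ring
      have e2 : 3*|Z ω / d| ≤ |Z ω / d|^2 + 9/4 := by
        nlinarith [sq_nonneg (|Z ω / d| - 3/2)]
      have e3 : 2*|Z ω / d|^2 = 2/d^2 * (Z ω)^2 := by rw [hsq, hw]; ring
      linarith
    calc ((⌈Z ω / d - 1/2⌉ : ℤ) : ℝ)^2 ≤ (|Z ω / d| + 3/2)^2 := hb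
      _ ≤ 2/d^2 * (Z ω)^2 + 9/2 := hfin
  have hFint : Integrable F γ := by
    have h1 : Integrable F (P.map Z) := by
      refine (integrable_map_measure (by rw [hZlaw]; exact hFmeas.aestronglyMeasurable)
        hZ.aemeasurable).mpr ?_
      exact (show Integrable (fun ω => F (Z ω)) P from hUF ▸ hint)
    rwa [hZlaw] at h1
  have hIeq : ∫ ω, (U ω : ℝ)^2 ∂P = ∫ z, F z ∂γ := by
    rw [hUF, ← hZlaw]
    exact (integral_map hZ.aemeasurable hFmeas.aestronglyMeasurable).symm
  -- partition
  set s : ℤ → Set ℝ := fun ℓ => Set.Ioc (d*ℓ - d/2) (d*ℓ + d/2) with hs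
  have hmem : ∀ (z : ℝ) (ℓ : ℤ), z ∈ s ℓ ↔ ⌈z/d - 1/2⌉ = ℓ := fun z ℓ =>
    gq_ceil_char d hd z ℓ
  have hsm : ∀ ℓ, MeasurableSet (s ℓ) := fun ℓ => measurableSet_Ioc
  have hdisj : Pairwise (Function.onFun Disjoint s) := by
    intro ℓ ℓ' hne
    rw [Function.onFun, Set.disjoint_left]
    intro z hz hz'
    exact hne (((hmem z ℓ).mp hz).symm.trans ((hmem z ℓ').mp hz'))
  have hcover : ⋃ ℓ, s ℓ = Set.univ := by
    ext z
    simp only [Set.mem_iUnion, Set.mem_univ, iff_true]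
    exact ⟨⌈z/d - 1/2⌉, (hmem z _).mpr rfl⟩
  have hfi : IntegrableOn F (⋃ ℓ, s ℓ) γ := by
    rw [hcover]; exact integrableOn_univ.mpr hFint
  have hHS0 := hasSum_integral_iUnion hsm hdisj hfi
  set p : ℤ → ℝ := fun ℓ => (γ (s ℓ)).toReal with hp
  have hterm : ∀ ℓ : ℤ, ∫ z in s ℓ, F z ∂γ = p ℓ * ((ℓ:ℝ))^2 := by
    intro ℓ
    rw [setIntegral_congr_fun (hsm ℓ) (g := fun _ => ((ℓ:ℝ))^2)
      (fun z hz => by simp only [hF]; rw [(hmem z ℓ).mp hz]),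
      setIntegral_const, smul_eq_mul]
    rfl
  have hHS : HasSum (fun ℓ : ℤ => p ℓ * ((ℓ:ℝ))^2) (∫ z, F z ∂γ) := by
    rw [hcover, Measure.restrict_univ] at hHS0
    simp_rw [hterm] at hHS0
    exact hHS0
  set g : ℤ → ℝ := fun ℓ => p ℓ * ((ℓ:ℝ))^2 with hg
  have hgs : Summable g := hHS.summable
  have h1s : Summable fun n : ℕ => g n :=
    hgs.comp_injective (fun a b h => by exact_mod_cast h)
  have h2s : Summable fun n : ℕ => g (-((n:ℤ)+1)) :=
    hgs.comp_injective (fun a b h => by omega)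
  -- q and identities
  set q : ℕ → ℝ := fun n => gaussQ (d*((n:ℝ)+1) - d/2) with hqdef
  have hq' : ∀ n : ℕ, p ((n:ℤ)+1) = q n - q (n+1) := by
    intro n
    have hab : d*((n:ℝ)+1) - d/2 ≤ d*((n:ℝ)+1) + d/2 := by linarith
    have h1 : s ((n:ℤ)+1) = Set.Ioc (d*((n:ℝ)+1) - d/2) (d*((n:ℝ)+1) + d/2) := by
      simp only [hs]; congr 1 <;> push_cast <;> ring
    have h2 : d*((n:ℝ)+1) + d/2 = d*(((n+1:ℕ):ℝ)+1) - d/2 := by push_cast; ring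
    simp only [hp, hqdef, h1, hγ]
    rw [gq_Ioc hab, h2]
  have hsymm : ∀ n : ℕ, p (-((n:ℤ)+1)) = p ((n:ℤ)+1) := by
    intro n
    have hab : d*((n:ℝ)+1) - d/2 ≤ d*((n:ℝ)+1) + d/2 := by linarith
    have h1 : s (-((n:ℤ)+1)) = Set.Ioc (-(d*((n:ℝ)+1) + d/2)) (-(d*((n:ℝ)+1) - d/2)) := by
      simp only [hs]; congr 1 <;> push_cast <;> ring
    have h2 : s ((n:ℤ)+1) = Set.Ioc (d*((n:ℝ)+1) - d/2) (d*((n:ℝ)+1) + d/2) := by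
      simp only [hs]; congr 1 <;> push_cast <;> ring
    simp only [hp, h1, h2, hγ]
    exact gq_Ioc_neg hab
  have hq0 : ∀ n, 0 ≤ q n := fun n => gaussQ_nonneg _
  have hqm : ∀ n, q (n+1) ≤ q n := by
    intro n
    simp only [hqdef]
    apply gaussQ_anti
    push_cast
    ring_nf
    nlinarith [Nat.cast_nonneg (α := ℝ) n]
  obtain ⟨C, hC0, hCb⟩ := gaussQ_bound
  have hqb : ∀ n : ℕ, q n ≤ (16*C/d^4) * (1/((n:ℝ)+1)^4) := by
    intro n
    have hn0 : (0:ℝ) ≤ (n:ℝ) := Nat.cast_nonneg n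
    have hxpos : 0 < d*((n:ℝ)+1) - d/2 := by nlinarith
    have h2 : d*((n:ℝ)+1)/2 ≤ d*((n:ℝ)+1) - d/2 := by nlinarith
    have h3 : (0:ℝ) < d*((n:ℝ)+1)/2 := by positivity
    have h4 : C / (d*((n:ℝ)+1) - d/2)^4 ≤ C / (d*((n:ℝ)+1)/2)^4 :=
      div_le_div_of_nonneg_left hC0 (by positivity) (pow_le_pow_left₀ h3.le h2 4)
    have h5 : C / (d*((n:ℝ)+1)/2)^4 = (16*C/d^4) * (1/((n:ℝ)+1)^4) := by
      field_simp
      ring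
    exact (hCb _ hxpos).trans (h4.trans_eq h5)
  have hbase : Summable (fun n : ℕ => 1/((n:ℝ)+1)^2) := by
    have h := Real.summable_one_div_nat_pow.mpr (show 1 < 2 by norm_num)
    exact ((summable_nat_add_iff 1).mpr h).congr fun n => by push_cast; ring
  have hA : Summable (fun n : ℕ => ((n:ℝ)+1)^2 * q n) := by
    refine Summable.of_nonneg_of_le (fun n => mul_nonneg (by positivity) (hq0 n))
      (fun n => ?_) (hbase.mul_left (16*C/d^4))
    have hstep : ((n:ℝ)+1)^2 * q n ≤ ((n:ℝ)+1)^2 * ((16*C/d^4) * (1/((n:ℝ)+1)^4)) :=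
      mul_le_mul_of_nonneg_left (hqb n) (by positivity)
    refine hstep.trans_eq ?_
    have hne : ((n:ℝ)+1) ≠ 0 := by positivity
    field_simp
  have hcS : Summable (fun n : ℕ => (2*(n:ℝ)+1) * q n) := by
    refine Summable.of_nonneg_of_le (fun n => mul_nonneg (by positivity) (hq0 n))
      (fun n => ?_) (hA.mul_left 2)
    have hle : (2*(n:ℝ)+1) ≤ 2*((n:ℝ)+1)^2 := by nlinarith [Nat.cast_nonneg (α := ℝ) n]
    calc (2*(n:ℝ)+1) * q n ≤ 2*((n:ℝ)+1)^2 * q n :=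
          mul_le_mul_of_nonneg_right hle (hq0 n)
      _ = 2 * (((n:ℝ)+1)^2 * q n) := by ring
  have habel := gq_abel q hq0 hqm hA hcS
  have hgpos : ∀ n : ℕ, g ((n:ℤ)+1) = ((n:ℝ)+1)^2 * (q n - q (n+1)) := by
    intro n
    simp only [hg]
    rw [hq' n]
    push_cast
    ring
  have hgneg : ∀ n : ℕ, g (-((n:ℤ)+1)) = ((n:ℝ)+1)^2 * (q n - q (n+1)) := by
    intro n
    simp only [hg]
    rw [hsymm n, hq' n]
    push_cast
    ring
  have htot : ∫ z, F z ∂γ = 2 * ∑' n : ℕ, (2*(n:ℝ)+1) * q n := by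
    calc ∫ z, F z ∂γ = ∑' ℓ : ℤ, g ℓ := hHS.tsum_eq.symm
      _ = (∑' n : ℕ, g n) + ∑' n : ℕ, g (-((n:ℤ)+1)) := tsum_of_nat_of_neg_add_one h1s h2s
      _ = (g 0 + ∑' n : ℕ, g ((n:ℤ)+1)) + ∑' n : ℕ, g (-((n:ℤ)+1)) := by
          rw [h1s.tsum_eq_zero_add]
          have e0 : g (((0:ℕ):ℤ)) = g 0 := by norm_cast
          have e1 : ∀ n : ℕ, g (((n+1:ℕ):ℤ)) = g ((n:ℤ)+1) := fun n => by norm_cast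
          rw [e0, tsum_congr e1]
      _ = (∑' n : ℕ, ((n:ℝ)+1)^2 * (q n - q (n+1)))
            + ∑' n : ℕ, ((n:ℝ)+1)^2 * (q n - q (n+1)) := by
          rw [tsum_congr hgpos, tsum_congr hgneg]
          simp [hg]
      _ = 2 * ∑' n : ℕ, (2*(n:ℝ)+1) * q n := by rw [habel.tsum_eq]; ring
  refine ⟨hint, ?_, ?_⟩
  · refine ((summable_nat_add_iff 1).mpr hcS).congr fun k => ?_
    simp only [hqdef]
    push_cast
    ring_nf
  · rw [hIeq, htot, hcS.tsum_eq_zero_add]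
    have hq0' : (2*((0:ℕ):ℝ)+1) * q 0 = gaussQ (d/2) := by
      simp only [hqdef]
      norm_num
      congr 1
      ring
    have htail : ∑' k : ℕ, (2*(((k+1:ℕ)):ℝ)+1) * q (k+1)
        = ∑' k : ℕ, (2 * ((k : ℝ) + 2) - 1) * gaussQ (d * ((k : ℝ) + 2) - d / 2) :=
      tsum_congr fun k => by simp only [hqdef]; push_cast; ring_nf
    rw [hq0', htail]
    ring
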